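/- Let C(δ) be the infimum of constants C such that every normalized sequence (1/δ)-equivalent to the unit vector basis of c₀ has an unconditional subsequence with constant C, and let L(δ₁) be the near-unconditionality constant for large coefficients. If δ₁ ≤ δ then C(δ) ≤ L(δ₁)·(1 + δ₁/δ) + δ₁/δ. -/

import Mathlib

open Filter ENNReal

noncomputable section

/-- A normalized sequence in a (real) Banach space, bundled. -/
structure NSeq where
  X : Type
  [grp : NormedAddCommGroup X]
  [mod : NormedSpace ℝ X]
  [comp : CompleteSpace X]
  x : ℕ → X
  norm_one : ∀ i, ‖x i‖ = 1

attribute [instance] NSeq.grp NSeq.mod NSeq.comp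

/-- The bundled sequence is weakly null. -/
def NSeq.WeaklyNull (s : NSeq) : Prop :=
  ∀ f : s.X →L[ℝ] ℝ, Tendsto (fun i => f (s.x i)) atTop (nhds 0)

/-- `L((yᵢ), δ)` (value in `ℝ≥0∞`): the least `C` such that
`‖∑_{i∈E} aᵢyᵢ‖ ≤ C‖∑ aᵢyᵢ‖` whenever `δ ≤ |aᵢ| ≤ 1` on the support of `a` and `E` is
finite. -/
def LS {X : Type} [NormedAddCommGroup X] [NormedSpace ℝ X] (δ : ℝ) (y : ℕ → X) : ℝ≥0∞ :=
  sInf {C | ∀ a : ℕ →₀ ℝ, (∀ i, |a i| ≤ 1) → (∀ i ∈ a.support, δ ≤ |a i|) →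
    ∀ E : Finset ℕ,
    (‖∑ i ∈ E, a i • y i‖₊ : ℝ≥0∞) ≤ C * (‖∑ i ∈ a.support, a i • y i‖₊ : ℝ≥0∞)}

/-- `L(δ)`: sup over normalized weakly null sequences of the inf over subsequences. -/
def Lfun (δ : ℝ) : ℝ≥0∞ :=
  ⨆ (s : NSeq) (_ : s.WeaklyNull), ⨅ (φ : ℕ → ℕ) (_ : StrictMono φ), LS δ (s.x ∘ φ)

/-- The bundled normalized sequence is `Cc`-equivalent to the unit vector basis of `c₀`
(whose norm of `∑ aᵢ eᵢ` is `sup |aᵢ|`). -/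
def NSeq.EquivC0 (s : NSeq) (Cc : ℝ) : Prop :=
  ∃ A B : ℝ, 0 < A ∧ 0 < B ∧ B / A ≤ Cc ∧
    ∀ a : ℕ →₀ ℝ,
      A * ‖∑ i ∈ a.support, a i • s.x i‖ ≤ (⨆ i, |a i|) ∧
      (⨆ i, |a i|) ≤ B * ‖∑ i ∈ a.support, a i • s.x i‖

/-- Unconditional with constant `C ∈ ℝ≥0∞`. -/
def UncondWith {X : Type} [NormedAddCommGroup X] [NormedSpace ℝ X]
    (C : ℝ≥0∞) (y : ℕ → X) : Prop :=
  ∀ a : ℕ →₀ ℝ, ∀ E : Finset ℕ,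
    (‖∑ i ∈ E, a i • y i‖₊ : ℝ≥0∞) ≤ C * (‖∑ i ∈ a.support, a i • y i‖₊ : ℝ≥0∞)

/-- `C(δ)`: the infimum of constants `C` such that every normalized sequence
`(1/δ)`-equivalent to the unit vector basis of `c₀` has an unconditional subsequence
with constant `C`. -/
def Cfun (δ : ℝ) : ℝ≥0∞ :=
  sInf {C | ∀ s : NSeq, s.EquivC0 (1 / δ) →
    ∃ φ : ℕ → ℕ, StrictMono φ ∧ UncondWith C (s.x ∘ φ)}



lemma finsupp_abs_bdd (a : ℕ →₀ ℝ) : BddAbove (Set.range fun i => |a i|) := by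
  refine ⟨∑ i ∈ a.support, |a i|, ?_⟩
  rintro _ ⟨i, rfl⟩
  by_cases hi : i ∈ a.support
  · exact Finset.single_le_sum (f := fun j => |a j|) (fun j _ => abs_nonneg _) hi
  · simp [Finsupp.notMem_support_iff.1 hi]
    exact Finset.sum_nonneg fun j _ => abs_nonneg _

lemma finsupp_abs_le_sup (a : ℕ →₀ ℝ) (i : ℕ) : |a i| ≤ ⨆ j, |a j| :=
  le_ciSup (finsupp_abs_bdd a) i

lemma finsupp_sup_nonneg (a : ℕ →₀ ℝ) : 0 ≤ ⨆ j, |a j| :=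
  Real.iSup_nonneg fun j => abs_nonneg _

lemma finsupp_sup_le (a : ℕ →₀ ℝ) {c : ℝ} (h : ∀ i, |a i| ≤ c) : (⨆ j, |a j|) ≤ c :=
  ciSup_le h

/-- Transport the c₀-equivalence estimates along an injective map. -/
lemma transport {X : Type} [NormedAddCommGroup X] [NormedSpace ℝ X]
    (x : ℕ → X) (A B : ℝ)
    (hs : ∀ a : ℕ →₀ ℝ,
      A * ‖∑ i ∈ a.support, a i • x i‖ ≤ (⨆ i, |a i|) ∧
      (⨆ i, |a i|) ≤ B * ‖∑ i ∈ a.support, a i • x i‖)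
    (φ : ℕ → ℕ) (hφ : Function.Injective φ) (c : ℕ →₀ ℝ) :
    A * ‖∑ i ∈ c.support, c i • x (φ i)‖ ≤ (⨆ i, |c i|) ∧
      (⨆ i, |c i|) ≤ B * ‖∑ i ∈ c.support, c i • x (φ i)‖ := by
  set e : ℕ ↪ ℕ := ⟨φ, hφ⟩
  set d := Finsupp.embDomain e c with hd
  have hsum : ∑ j ∈ d.support, d j • x j = ∑ i ∈ c.support, c i • x (φ i) := by
    rw [hd, Finsupp.support_embDomain, Finset.sum_map]
    exact Finset.sum_congr rfl fun i _ => by rw [Finsupp.embDomain_apply_self]; rfl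
  have hsup : (⨆ j, |d j|) = ⨆ i, |c i| := by
    apply le_antisymm
    · apply ciSup_le
      intro j
      by_cases hj : j ∈ Set.range φ
      · obtain ⟨i, rfl⟩ := hj
        rw [show φ i = e i from rfl, Finsupp.embDomain_apply_self]
        exact finsupp_abs_le_sup c i
      · rw [Finsupp.embDomain_notin_range e c j hj]
        simpa using finsupp_sup_nonneg c
    · apply ciSup_le
      intro i
      have : c i = d (φ i) := (Finsupp.embDomain_apply_self e c i).symm
      rw [this]
      exact finsupp_abs_le_sup d (φ i)
  rw [← hsum, ← hsup]
  exact hs d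
section WN
variable {X : Type} [NormedAddCommGroup X] [NormedSpace ℝ X]

lemma finsupp_sup_le' (a : ℕ →₀ ℝ) {c : ℝ} (h : ∀ i, |a i| ≤ c) : (⨆ j, |a j|) ≤ c :=
  ciSup_le h

/-- A sequence satisfying the c₀-equivalence estimates is weakly null. -/
lemma weaklyNull_of_equiv (x : ℕ → X) (A : ℝ) (hA : 0 < A)
    (hs : ∀ a : ℕ →₀ ℝ, A * ‖∑ i ∈ a.support, a i • x i‖ ≤ (⨆ i, |a i|))
    (f : X →L[ℝ] ℝ) : Tendsto (fun i => f (x i)) atTop (nhds 0) := by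
  rw [← Nat.cofinite_eq_atTop, NormedAddCommGroup.tendsto_nhds_zero]
  intro ε hε
  rw [Filter.eventually_cofinite]
  by_contra hinf
  have hinf' : Set.Infinite {i | ¬ ‖f (x i)‖ < ε} := hinf
  obtain ⟨n, hn⟩ := exists_nat_gt (‖f‖ / (A * ε))
  obtain ⟨F, hFsub, hFcard⟩ := hinf'.exists_subset_card_eq n
  classical
  set g : ℕ → ℝ := fun i => if i ∈ F then (if 0 ≤ f (x i) then (1:ℝ) else -1) else 0 with hg
  have hgF : ∀ i, g i ≠ 0 → i ∈ F := by
    intro i hi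
    by_contra h
    simp [hg, h] at hi
  set a : ℕ →₀ ℝ := Finsupp.onFinset F g hgF with ha
  have hav : ∀ i, a i = g i := fun i => rfl
  have hsupp : a.support = F := by
    apply subset_antisymm Finsupp.support_onFinset_subset
    intro i hi
    rw [Finsupp.mem_support_iff, hav, hg]
    simp only [hi, if_true]
    split <;> norm_num
  have habs : ∀ i, |a i| ≤ 1 := by
    intro i
    rw [hav, hg]
    simp only []
    split
    · split <;> norm_num
    · norm_num
  have hεle : ∀ i ∈ F, ε ≤ |f (x i)| := by
    intro i hi
    have := hFsub hi
    simpa [Real.norm_eq_abs, not_lt] using this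
  have hkey : ∀ i ∈ F, a i * f (x i) = |f (x i)| := by
    intro i hi
    rw [hav, hg]
    simp only [hi, if_true]

    rcases le_or_gt 0 (f (x i)) with h | h
    · rw [if_pos h, one_mul, abs_of_nonneg h]
    · rw [if_neg (not_le.2 h), abs_of_neg h]; ring
  have hsup1 : (⨆ i, |a i|) ≤ 1 := finsupp_sup_le' a habs
  have hnorm : ‖∑ i ∈ a.support, a i • x i‖ ≤ A⁻¹ := by
    have h1 := (hs a).trans hsup1
    rw [← mul_one A⁻¹]
    exact (le_inv_mul_iff₀ hA).2 h1
  have hchain : ε * n ≤ ‖f‖ * A⁻¹ := by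
    have h1 : ε * n ≤ ∑ i ∈ F, |f (x i)| := by
      calc ε * n = ∑ _i ∈ F, ε := by rw [Finset.sum_const, hFcard, nsmul_eq_mul, mul_comm]
      _ ≤ _ := Finset.sum_le_sum hεle
    have h2 : ∑ i ∈ F, |f (x i)| = f (∑ i ∈ a.support, a i • x i) := by
      rw [hsupp, map_sum]
      refine Finset.sum_congr rfl fun i hi => ?_
      rw [map_smul, smul_eq_mul, hkey i hi]
    have h3 : f (∑ i ∈ a.support, a i • x i) ≤ ‖f‖ * ‖∑ i ∈ a.support, a i • x i‖ := by
      calc f _ ≤ |f _| := le_abs_self _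
      _ = ‖f (∑ i ∈ a.support, a i • x i)‖ := (Real.norm_eq_abs _).symm
      _ ≤ ‖f‖ * ‖∑ i ∈ a.support, a i • x i‖ := f.le_opNorm _
    calc ε * n ≤ f (∑ i ∈ a.support, a i • x i) := h1.trans_eq h2
    _ ≤ ‖f‖ * ‖∑ i ∈ a.support, a i • x i‖ := h3
    _ ≤ ‖f‖ * A⁻¹ := by gcongr
  have hfin : (n : ℝ) ≤ ‖f‖ / (A * ε) := by
    rw [le_div_iff₀ (mul_pos hA hε)]
    have hAA : A * A⁻¹ = 1 := mul_inv_cancel₀ hA.ne'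
    nlinarith [mul_le_mul_of_nonneg_left hchain hA.le, norm_nonneg f]
  linarith

end WN
section Main
variable {X : Type} [NormedAddCommGroup X] [NormedSpace ℝ X]

/-- sum over a superset of the support equals sum over the support -/
lemma sum_support_eq (y : ℕ → X) (c : ℕ →₀ ℝ) {G : Finset ℕ} (h : c.support ⊆ G) :
    ∑ i ∈ G, c i • y i = ∑ i ∈ c.support, c i • y i := by
  refine (Finset.sum_subset h fun i _ hi => ?_).symm
  rw [Finsupp.notMem_support_iff.1 hi, zero_smul]

lemma main_step (δ δ₁ A B : ℝ) (y : ℕ → X)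
    (hδ₁ : 0 < δ₁) (h₁δ : δ₁ ≤ δ)
    (hA : 0 < A) (hB : 0 < B) (hBA : B / A ≤ 1 / δ)
    (heq : ∀ c : ℕ →₀ ℝ,
      A * ‖∑ i ∈ c.support, c i • y i‖ ≤ (⨆ i, |c i|) ∧
      (⨆ i, |c i|) ≤ B * ‖∑ i ∈ c.support, c i • y i‖)
    (Λ : ℝ≥0∞) (hΛtop : Λ ≠ ⊤)
    (hΛ : ∀ a : ℕ →₀ ℝ, (∀ i, |a i| ≤ 1) → (∀ i ∈ a.support, δ₁ ≤ |a i|) →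
      ∀ E : Finset ℕ,
      (‖∑ i ∈ E, a i • y i‖₊ : ℝ≥0∞) ≤ Λ * (‖∑ i ∈ a.support, a i • y i‖₊ : ℝ≥0∞)) :
    ∀ a : ℕ →₀ ℝ, ∀ E : Finset ℕ,
      (‖∑ i ∈ E, a i • y i‖₊ : ℝ≥0∞) ≤ (Λ * (1 + ENNReal.ofReal (δ₁ / δ)) + ENNReal.ofReal (δ₁ / δ))
        * (‖∑ i ∈ a.support, a i • y i‖₊ : ℝ≥0∞) := by
  classical
  have hδ : 0 < δ := hδ₁.trans_le h₁δ
  intro a E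
  by_cases ha0 : a = 0
  · simp [ha0]
  -- notation
  set m : ℝ := ⨆ i, |a i| with hm
  have hm0 : 0 < m := by
    obtain ⟨i, hi⟩ := Finsupp.ne_iff.1 ha0
    have : 0 < |a i| := by simpa using hi
    exact this.trans_le (finsupp_abs_le_sup a i)
  set N : ℝ := ‖∑ i ∈ a.support, a i • y i‖ with hN
  have hN0 : 0 ≤ N := norm_nonneg _
  have hmBN : m ≤ B * N := (heq a).2
  set c : ℝ := δ₁ / δ with hc
  have hc0 : 0 < c := div_pos hδ₁ hδ
  -- the small part bound: for any finset G,
  have hsmall : ∀ G : Finset ℕ,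
      ‖∑ i ∈ G, (a.filter fun i => ¬ δ₁ * m ≤ |a i|) i • y i‖ ≤ c * N := by
    intro G
    set aS := a.filter (fun i => ¬ δ₁ * m ≤ |a i|) with haS
    set cG := aS.filter (· ∈ G) with hcG
    have hcGval : ∀ i ∈ G, cG i = aS i := by
      intro i hi
      rw [hcG, Finsupp.filter_apply]
      simp [hi]
    have h1 : ∑ i ∈ G, aS i • y i = ∑ i ∈ cG.support, cG i • y i := by
      rw [← sum_support_eq y cG (G := G)]
      · refine Finset.sum_congr rfl fun i hi => ?_
        rw [hcGval i hi]
      · intro i hi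
        rw [hcG, Finsupp.support_filter] at hi
        exact (Finset.mem_filter.1 hi).2
    have h2 : ∀ i, |cG i| ≤ δ₁ * m := by
      intro i
      by_cases hiz : cG i = 0
      · rw [hiz, abs_zero]; positivity
      · have hi1 : cG i = a i ∧ ¬ δ₁ * m ≤ |a i| := by
          rw [hcG, Finsupp.filter_apply] at hiz ⊢
          split at hiz
          · rw [haS, Finsupp.filter_apply] at hiz ⊢
            split at hiz
            · simp_all
            · exact absurd rfl hiz
          · exact absurd rfl hiz
        rw [hi1.1]
        exact (not_le.1 hi1.2).le
    have h3 : (⨆ i, |cG i|) ≤ δ₁ * m := ciSup_le h2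
    have h4 : A * ‖∑ i ∈ cG.support, cG i • y i‖ ≤ δ₁ * m := (heq cG).1.trans h3
    rw [h1]
    -- A * ‖·‖ ≤ δ₁ * m ≤ δ₁ * B * N, and B/A ≤ 1/δ
    have h5 : A * ‖∑ i ∈ cG.support, cG i • y i‖ ≤ δ₁ * (B * N) := by
      refine h4.trans ?_
      exact mul_le_mul_of_nonneg_left hmBN hδ₁.le
    have hBAd : B ≤ A / δ := by
      rw [div_le_div_iff₀ hA hδ] at hBA
      rw [le_div_iff₀ hδ]
      linarith
    have : A * ‖∑ i ∈ cG.support, cG i • y i‖ ≤ A * (c * N) := by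
      refine h5.trans ?_
      rw [hc]
      calc δ₁ * (B * N) ≤ δ₁ * ((A / δ) * N) := by
            refine mul_le_mul_of_nonneg_left ?_ hδ₁.le
            exact mul_le_mul_of_nonneg_right hBAd hN0
      _ = A * (δ₁ / δ * N) := by ring
    exact le_of_mul_le_mul_left this hA
  -- decomposition
  set aB := a.filter (fun i => δ₁ * m ≤ |a i|) with haB
  set aS := a.filter (fun i => ¬ δ₁ * m ≤ |a i|) with haS
  have hdecomp : ∀ i, a i = aB i + aS i := by
    intro i
    rw [haB, haS, Finsupp.filter_apply, Finsupp.filter_apply]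
    split <;> simp
  have hsum_split : ∀ G : Finset ℕ,
      ∑ i ∈ G, a i • y i = ∑ i ∈ G, aB i • y i + ∑ i ∈ G, aS i • y i := by
    intro G
    rw [← Finset.sum_add_distrib]
    refine Finset.sum_congr rfl fun i _ => ?_
    rw [hdecomp i, add_smul]
  -- big part: norm over its support bounded by (1+c) N
  have hsuppB : aB.support ⊆ a.support := by
    rw [haB, Finsupp.support_filter]; exact Finset.filter_subset _ _
  have hbig_supp : ‖∑ i ∈ aB.support, aB i • y i‖ ≤ (1 + c) * N := by
    have h1 : ∑ i ∈ aB.support, aB i • y i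
        = ∑ i ∈ a.support, a i • y i - ∑ i ∈ a.support, aS i • y i := by
      rw [hsum_split a.support, sum_support_eq y aB hsuppB]
      abel
    rw [h1]
    calc ‖_ - _‖ ≤ N + ‖∑ i ∈ a.support, aS i • y i‖ := norm_sub_le _ _
    _ ≤ N + c * N := by gcongr; exact hsmall a.support
    _ = (1 + c) * N := by ring
  -- apply Λ to b = m⁻¹ • aB
  set b : ℕ →₀ ℝ := m⁻¹ • aB with hb
  have hbv : ∀ i, b i = m⁻¹ * aB i := fun i => rfl
  have habs_le : ∀ i, |aB i| ≤ |a i| := by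
    intro i
    rw [haB, Finsupp.filter_apply]
    split <;> simp [abs_nonneg]
  have hb1 : ∀ i, |b i| ≤ 1 := by
    intro i
    rw [hbv, abs_mul, abs_of_pos (inv_pos.2 hm0)]
    rw [inv_mul_le_iff₀ hm0, mul_one]
    exact (habs_le i).trans (finsupp_abs_le_sup a i)
  have hbsupp : b.support = aB.support := Finsupp.support_smul_eq (inv_ne_zero hm0.ne')
  have hb2 : ∀ i ∈ b.support, δ₁ ≤ |b i| := by
    intro i hi
    rw [hbsupp, haB, Finsupp.support_filter, Finset.mem_filter] at hi
    rw [hbv, haB, Finsupp.filter_apply, if_pos hi.2, abs_mul, abs_of_pos (inv_pos.2 hm0)]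
    rw [le_inv_mul_iff₀ hm0]
    calc m * δ₁ = δ₁ * m := mul_comm _ _
    _ ≤ |a i| := hi.2
  have hΛb := hΛ b hb1 hb2 E
  -- convert to reals
  set Λr : ℝ := Λ.toReal with hΛr
  have hΛr0 : 0 ≤ Λr := ENNReal.toReal_nonneg
  have hΛreal : ‖∑ i ∈ E, b i • y i‖ ≤ Λr * ‖∑ i ∈ b.support, b i • y i‖ := by
    have := ENNReal.toReal_mono (by
      exact ENNReal.mul_ne_top hΛtop ENNReal.coe_ne_top) hΛb
    rwa [ENNReal.toReal_mul, ENNReal.coe_toReal, ENNReal.coe_toReal, coe_nnnorm, coe_nnnorm] at this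
  -- rescale
  have hscaleB : ∀ G : Finset ℕ, ∑ i ∈ G, b i • y i = m⁻¹ • ∑ i ∈ G, aB i • y i := by
    intro G
    rw [Finset.smul_sum]
    refine Finset.sum_congr rfl fun i _ => ?_
    rw [hbv i, mul_smul]
  have hnormb : ∀ G : Finset ℕ,
      ‖∑ i ∈ G, b i • y i‖ = m⁻¹ * ‖∑ i ∈ G, aB i • y i‖ := by
    intro G
    rw [hscaleB G, norm_smul, Real.norm_eq_abs, abs_of_pos (inv_pos.2 hm0)]
  have hbig : ‖∑ i ∈ E, aB i • y i‖ ≤ Λr * ((1 + c) * N) := by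
    have h4 := mul_le_mul_of_nonneg_left hΛreal hm0.le
    rw [hnormb E, hbsupp, hnormb aB.support] at h4
    have e1 : m * (m⁻¹ * ‖∑ i ∈ E, aB i • y i‖) = ‖∑ i ∈ E, aB i • y i‖ := by
      field_simp
    have e2 : m * (Λr * (m⁻¹ * ‖∑ i ∈ aB.support, aB i • y i‖))
        = Λr * ‖∑ i ∈ aB.support, aB i • y i‖ := by
      field_simp
    rw [e1, e2] at h4
    exact h4.trans (mul_le_mul_of_nonneg_left hbig_supp hΛr0)
  have hfinal : ‖∑ i ∈ E, a i • y i‖ ≤ (Λr * (1 + c) + c) * N := by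
    rw [hsum_split E]
    calc ‖∑ i ∈ E, aB i • y i + ∑ i ∈ E, aS i • y i‖
        ≤ ‖∑ i ∈ E, aB i • y i‖ + ‖∑ i ∈ E, aS i • y i‖ := norm_add_le _ _
    _ ≤ Λr * ((1 + c) * N) + c * N := add_le_add hbig (hsmall E)
    _ = (Λr * (1 + c) + c) * N := by ring
  rw [← enorm_eq_nnnorm, ← enorm_eq_nnnorm, ← ofReal_norm, ← ofReal_norm]
  calc ENNReal.ofReal ‖∑ i ∈ E, a i • y i‖
      ≤ ENNReal.ofReal ((Λr * (1 + c) + c) * N) := ENNReal.ofReal_le_ofReal hfinal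
  _ = ENNReal.ofReal (Λr * (1 + c) + c) * ENNReal.ofReal N :=
      ENNReal.ofReal_mul (by positivity)
  _ = (Λ * (1 + ENNReal.ofReal c) + ENNReal.ofReal c) * ENNReal.ofReal N := by
      congr 1
      rw [ENNReal.ofReal_add (by positivity) hc0.le, ENNReal.ofReal_mul hΛr0,
        ENNReal.ofReal_add zero_le_one hc0.le, ENNReal.ofReal_one,
        ENNReal.ofReal_toReal hΛtop]

end Main

/-- If `δ₁ ≤ δ` then `C(δ) ≤ L(δ₁)·(1 + δ₁/δ) + δ₁/δ`. -/
theorem c0_problem_upper_bound :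
    ∀ δ δ₁ : ℝ, 0 < δ₁ → δ₁ ≤ δ → δ ≤ 1 →
      Cfun δ ≤ Lfun δ₁ * (1 + ENNReal.ofReal (δ₁ / δ)) + ENNReal.ofReal (δ₁ / δ) := by
  intro δ δ₁ hδ₁ h₁δ hδ1
  have hδ : 0 < δ := hδ₁.trans_le h₁δ
  set r := ENNReal.ofReal (δ₁ / δ) with hr
  have hr1 : r ≤ 1 := by
    rw [hr]
    exact ENNReal.ofReal_le_one.2 ((div_le_one hδ).2 h₁δ)
  by_cases hL : Lfun δ₁ = ⊤
  · rw [hL, ENNReal.top_mul (by simp : (1 : ℝ≥0∞) + r ≠ 0), top_add]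
    exact le_top
  · apply ENNReal.le_of_forall_pos_le_add
    intro ε hε _
    set L := Lfun δ₁ with hLdef
    have hεne : ((ε : ℝ≥0∞)) ≠ 0 := by exact_mod_cast hε.ne'
    have hεE : ((ε : ℝ≥0∞) / 2) ≠ 0 := by
      simp [ENNReal.div_eq_zero_iff, hεne]
    have hC0mem : ((L + (ε : ℝ≥0∞) / 2) * (1 + r) + r) ∈
        {C | ∀ s : NSeq, s.EquivC0 (1 / δ) →
          ∃ φ : ℕ → ℕ, StrictMono φ ∧ UncondWith C (s.x ∘ φ)} := by
      intro s hs
      obtain ⟨A, B, hA, hB, hBA, heq⟩ := hs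
      have hwn : s.WeaklyNull := fun f => weaklyNull_of_equiv s.x A hA (fun a => (heq a).1) f
      have h1 : (⨅ (φ : ℕ → ℕ) (_ : StrictMono φ), LS δ₁ (s.x ∘ φ)) ≤ L := by
        rw [hLdef, Lfun]
        exact le_iSup₂ (f := fun (s : NSeq) (_ : s.WeaklyNull) =>
          ⨅ (φ : ℕ → ℕ) (_ : StrictMono φ), LS δ₁ (s.x ∘ φ)) s hwn
      have h2 : (⨅ (φ : ℕ → ℕ) (_ : StrictMono φ), LS δ₁ (s.x ∘ φ)) < L + (ε : ℝ≥0∞) / 2 :=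
        h1.trans_lt (ENNReal.lt_add_right hL hεE)
      rw [iInf_lt_iff] at h2
      obtain ⟨φ, h2⟩ := h2
      rw [iInf_lt_iff] at h2
      obtain ⟨hφ, h2⟩ := h2
      rw [LS, sInf_lt_iff] at h2
      obtain ⟨Λ, hΛmem, hΛlt⟩ := h2
      have hΛtop : Λ ≠ ⊤ := ne_top_of_lt hΛlt
      refine ⟨φ, hφ, ?_⟩
      have hmain := main_step δ δ₁ A B (s.x ∘ φ) hδ₁ h₁δ hA hB hBA
        (fun c => transport s.x A B heq φ hφ.injective c) Λ hΛtop hΛmem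
      intro a E
      exact (hmain a E).trans (mul_le_mul_left
        (add_le_add (mul_le_mul_left hΛlt.le _) le_rfl) _)
    refine le_trans (sInf_le hC0mem) ?_
    have h2r : (1 : ℝ≥0∞) + r ≤ 2 := by
      calc (1 : ℝ≥0∞) + r ≤ 1 + 1 := add_le_add_right hr1 1
      _ = 2 := one_add_one_eq_two
    have hε2 : ((ε : ℝ≥0∞) / 2) * (1 + r) ≤ (ε : ℝ≥0∞) := by
      calc ((ε : ℝ≥0∞) / 2) * (1 + r) ≤ ((ε : ℝ≥0∞) / 2) * 2 := mul_le_mul_right h2r _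
      _ = (ε : ℝ≥0∞) := ENNReal.div_mul_cancel (by norm_num) (by norm_num)
    calc (L + (ε : ℝ≥0∞) / 2) * (1 + r) + r
        = (L * (1 + r) + r) + ((ε : ℝ≥0∞) / 2) * (1 + r) := by ring
    _ ≤ (L * (1 + r) + r) + (ε : ℝ≥0∞) := add_le_add le_rfl hε2


end
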